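/- Let N ≥ 2, K > 0, and γ ∈ (0, π/2). Let a : [0,∞) → ℝ^{N×N} be a family of symmetric matrices with nonnegative entries, and let c : [0,∞) → [0,∞) be locally integrable and such that for every t ≥ 0 and every w ∈ ℝ^N with ∑_i w_i = 0, ∑_{i,j=1}^N a_{ij}(t)·(w_i − w_j)² ≥ c(t)·∑_{i=1}^N w_i². Assume moreover that ∫_0^t c(s) ds → ∞ as t → ∞. Suppose θ : [0,∞) → ℝ^N is differentiable and satisfies the homogeneous Kuramoto system dθ_i/dt = (K/N)·∑_{j=1}^N a_{ij}(t)·sin(θ_j(t) − θ_i(t)), with ∑_{i=1}^N θ_i(0) = 0 and |θ_i(0) − θ_j(0)| ≤ γ for all i, j. Then θ(t) → 0 as t → ∞. -/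

import Mathlib

open Real MeasureTheory Filter intervalIntegral

open Topology Set

private lemma xsin_bound' {x : ℝ} (h : |x| ≤ Real.pi / 2) :
    2 / Real.pi * x ^ 2 ≤ x * Real.sin x := by
  rcases le_or_gt 0 x with hx | hx
  · have h1 : x ≤ Real.pi / 2 := by rwa [abs_of_nonneg hx] at h
    have h2 := Real.mul_le_sin hx h1
    nlinarith [mul_le_mul_of_nonneg_right h2 hx]
  · have hy : (0:ℝ) ≤ -x := by linarith
    have h1 : -x ≤ Real.pi / 2 := by rwa [abs_of_neg hx] at h
    have h2 := Real.mul_le_sin hy h1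
    rw [Real.sin_neg] at h2
    nlinarith [mul_le_mul_of_nonneg_right h2 hy]

set_option maxHeartbeats 1600000 in
/-- Synchronization from the phase-cohesive set: if the cumulative spectral
gap of the time-varying network diverges, the homogeneous Kuramoto system
started in Δ(γ), γ < π/2, with mean zero converges to the all-in-phase
state 0. -/
theorem kuramoto_synchronization_from_cohesive
    (N : ℕ) (hN : 2 ≤ N) (K : ℝ) (hK : 0 < K)
    (γ : ℝ) (hγ0 : 0 < γ) (hγ : γ < Real.pi / 2)
    (a : ℝ → Fin N → Fin N → ℝ)
    (hsym : ∀ t : ℝ, 0 ≤ t → ∀ i j : Fin N, a t i j = a t j i)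
    (ha : ∀ t : ℝ, 0 ≤ t → ∀ i j : Fin N, 0 ≤ a t i j)
    (c : ℝ → ℝ)
    (hc0 : ∀ t : ℝ, 0 ≤ t → 0 ≤ c t)
    (hcInt : ∀ t : ℝ, 0 ≤ t → IntervalIntegrable c volume 0 t)
    (hgap : ∀ t : ℝ, 0 ≤ t → ∀ w : Fin N → ℝ, (∑ i : Fin N, w i) = 0 →
      c t * ∑ i : Fin N, (w i) ^ 2
        ≤ ∑ i : Fin N, ∑ j : Fin N, a t i j * (w i - w j) ^ 2)
    (hdiv : Tendsto (fun t : ℝ => ∫ s in (0:ℝ)..t, c s) atTop atTop)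
    (θ : ℝ → Fin N → ℝ)
    (hode : ∀ t : ℝ, 0 ≤ t → ∀ i : Fin N,
      HasDerivAt (fun s => θ s i)
        ((K / N) * ∑ j : Fin N, a t i j * Real.sin (θ t j - θ t i)) t)
    (hmean0 : ∑ i : Fin N, θ 0 i = 0)
    (hinit : ∀ i j : Fin N, |θ 0 i - θ 0 j| ≤ γ) :
    Tendsto θ atTop (nhds 0) := by
  have hNR : (0:ℝ) < (N:ℝ) := by positivity
  have hpi : (0:ℝ) < Real.pi := Real.pi_pos
  have hγπ : γ < Real.pi := by linarith [Real.pi_pos]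
  have hNe : (Finset.univ : Finset (Fin N × Fin N)).Nonempty :=
    ⟨(⟨0, by omega⟩, ⟨0, by omega⟩), Finset.mem_univ _⟩
  -- the max of pairwise differences
  set g : ℝ → ℝ :=
    fun s => Finset.univ.sup' hNe (fun p : Fin N × Fin N => θ s p.1 - θ s p.2) with hgdef
  have hcontθ : ∀ x : ℝ, 0 ≤ x → ∀ i : Fin N, ContinuousAt (fun s => θ s i) x :=
    fun x hx i => (hode x hx i).continuousAt
  have hgcont : ∀ x : ℝ, 0 ≤ x → ContinuousAt g x := by
    intro x hx
    exact ContinuousAt.finset_sup'_apply hNe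
      (fun p _ => ((hcontθ x hx p.1).sub (hcontθ x hx p.2)))
  have hact : ∀ x : ℝ, (Finset.univ.filter
      (fun p : Fin N × Fin N => θ x p.1 - θ x p.2 = g x)).Nonempty := by
    intro x
    obtain ⟨p, _, hp⟩ := Finset.exists_mem_eq_sup' hNe
      (fun p : Fin N × Fin N => θ x p.1 - θ x p.2)
    exact ⟨p, Finset.mem_filter.2 ⟨Finset.mem_univ _, hp.symm⟩⟩
  set D : ℝ → ℝ := fun x => (Finset.univ.filter
      (fun p : Fin N × Fin N => θ x p.1 - θ x p.2 = g x)).sup' (hact x)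
      (fun p => deriv (fun s => θ s p.1 - θ s p.2) x) with hDdef
  -- liminf slope bound for the max function
  have hf' : ∀ T : ℝ, ∀ x ∈ Ico (0:ℝ) T, ∀ r, D x < r →
      ∃ᶠ z in 𝓝[>] x, slope g x z < r := by
    intro T x hx r hr
    by_contra hcon
    rw [Filter.not_frequently] at hcon
    set z : ℕ → ℝ := fun n => x + 1 / ((n:ℝ) + 1) with hz
    have hzx : ∀ n : ℕ, x < z n := by
      intro n
      have h1 : (0:ℝ) < 1 / ((n:ℝ)+1) := by positivity
      simp only [hz]; linarith
    have hztnh : Tendsto z atTop (𝓝 x) := by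
      have h1 := tendsto_one_div_add_atTop_nhds_zero_nat (𝕜 := ℝ)
      have h2 : Tendsto (fun _ : ℕ => x) atTop (𝓝 x) := tendsto_const_nhds
      simpa [hz] using h2.add h1
    have hzt : Tendsto z atTop (𝓝[>] x) := by
      apply tendsto_nhdsWithin_of_tendsto_nhds_of_eventually_within _ hztnh
      exact Eventually.of_forall fun n => hzx n
    have hslope : ∀ᶠ n in atTop, r ≤ slope g x (z n) :=
      (hzt.eventually hcon).mono fun n h => not_lt.1 h
    have hactz : ∀ n : ℕ, ∃ p : Fin N × Fin N,
        θ (z n) p.1 - θ (z n) p.2 = g (z n) := by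
      intro n
      obtain ⟨p, _, hp⟩ := Finset.exists_mem_eq_sup' hNe
        (fun p : Fin N × Fin N => θ (z n) p.1 - θ (z n) p.2)
      exact ⟨p, hp.symm⟩
    choose P hP using hactz
    obtain ⟨q, hqinf⟩ := Finite.exists_infinite_fiber P
    have hqfreq : ∃ᶠ n in atTop, P n = q := by
      rw [Nat.frequently_atTop_iff_infinite]
      have := Set.infinite_coe_iff.1 hqinf
      convert this using 1
      ext n; simp
    have hfreq : ∃ᶠ n in atTop, P n = q ∧ r ≤ slope g x (z n) :=
      hqfreq.and_eventually hslope
    have hqle : θ x q.1 - θ x q.2 ≤ g x :=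
      Finset.le_sup' (fun p : Fin N × Fin N => θ x p.1 - θ x p.2) (Finset.mem_univ q)
    have hcont1 : Tendsto (fun n => θ (z n) q.1 - θ (z n) q.2) atTop
        (𝓝 (θ x q.1 - θ x q.2)) :=
      (((hcontθ x hx.1 q.1).sub (hcontθ x hx.1 q.2)).tendsto).comp hztnh
    have hqx : θ x q.1 - θ x q.2 = g x := by
      by_contra hne'
      have hlt : θ x q.1 - θ x q.2 < g x := lt_of_le_of_ne hqle hne'
      have hc2 : Tendsto (fun n => r * (z n - x)) atTop (𝓝 0) := by
        have hcx : Tendsto (fun _ : ℕ => x) atTop (𝓝 x) := tendsto_const_nhds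
        have := (hztnh.sub hcx).const_mul r
        simpa using this
      have hcont2 : Tendsto (fun n => (θ (z n) q.1 - θ (z n) q.2) - r * (z n - x))
          atTop (𝓝 (θ x q.1 - θ x q.2)) := by
        have := hcont1.sub hc2; simpa using this
      have hev : ∀ᶠ n in atTop,
          (θ (z n) q.1 - θ (z n) q.2) - r * (z n - x) < g x :=
        hcont2.eventually_lt_const hlt
      obtain ⟨n, ⟨hPn, hrs⟩, hn2⟩ := (hfreq.and_eventually hev).exists
      have hgzn : θ (z n) q.1 - θ (z n) q.2 = g (z n) := by rw [← hPn]; exact hP n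
      rw [slope_def_field] at hrs
      have hpos : 0 < z n - x := by linarith [hzx n]
      rw [le_div_iff₀ hpos] at hrs
      have : g x ≤ θ (z n) q.1 - θ (z n) q.2 - r * (z n - x) := by
        have hle : g x ≤ g (z n) - r * (z n - x) := by linarith
        rw [← hgzn] at hle; linarith
      linarith
    -- q is active at x; its slope tends to its derivative which is < r
    have hd : HasDerivAt (fun s => θ s q.1 - θ s q.2)
        (((K / N) * ∑ j : Fin N, a x q.1 j * Real.sin (θ x j - θ x q.1)) -
         ((K / N) * ∑ j : Fin N, a x q.2 j * Real.sin (θ x j - θ x q.2))) x :=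
      (hode x hx.1 q.1).sub (hode x hx.1 q.2)
    have hdD : deriv (fun s => θ s q.1 - θ s q.2) x ≤ D x :=
      Finset.le_sup' (fun p : Fin N × Fin N => deriv (fun s => θ s p.1 - θ s p.2) x)
        (Finset.mem_filter.2 ⟨Finset.mem_univ _, hqx⟩)
    have hzne : Tendsto z atTop (𝓝[≠] x) := by
      apply tendsto_nhdsWithin_of_tendsto_nhds_of_eventually_within _ hztnh
      exact Eventually.of_forall fun n => (ne_of_gt (hzx n))
    have hslopetend : Tendsto (fun n => slope (fun s => θ s q.1 - θ s q.2) x (z n))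
        atTop (𝓝 (deriv (fun s => θ s q.1 - θ s q.2) x)) := by
      rw [hd.deriv]
      exact (hasDerivAt_iff_tendsto_slope.1 hd).comp hzne
    have hevlt : ∀ᶠ n in atTop, slope (fun s => θ s q.1 - θ s q.2) x (z n) < r :=
      hslopetend.eventually_lt_const (lt_of_le_of_lt hdD hr)
    obtain ⟨n, ⟨hPn, hrs⟩, hn2⟩ := (hfreq.and_eventually hevlt).exists
    have hgzn : θ (z n) q.1 - θ (z n) q.2 = g (z n) := by rw [← hPn]; exact hP n
    rw [slope_def_field] at hrs hn2
    rw [hgzn, hqx] at hn2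
    linarith
  -- the fencing argument: cohesiveness
  have hg0 : g 0 ≤ γ := by
    apply Finset.sup'_le
    intro p _
    exact (abs_le.1 (hinit p.1 p.2)).2
  have hfence : ∀ T : ℝ, 0 ≤ T → ∀ ε : ℝ, 0 < ε → γ + ε * T ≤ Real.pi →
      g T ≤ γ + ε * T := by
    intro T hT ε hε hεπ
    have hB : ∀ x : ℝ, HasDerivAt (fun u => γ + ε * u) ε x := by
      intro x
      have h1 : HasDerivAt (fun u : ℝ => ε * u) (ε * 1) x := (hasDerivAt_id x).const_mul ε
      simpa using h1.const_add γ
    have key := image_le_of_liminf_slope_right_lt_deriv_boundary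
      (f := g) (f' := D) (a := 0) (b := T) (B := fun u => γ + ε * u) (B' := fun _ => ε)
      ?_ (hf' T) ?_ hB ?_ (right_mem_Icc.2 hT)
    · simpa using key
    · intro x hx
      exact (hgcont x hx.1).continuousWithinAt
    · simpa using hg0
    · intro x hx hgx0
      have hgx : g x = γ + ε * x := hgx0
      -- at a contact point every active pair has nonpositive derivative
      have hx0 : (0:ℝ) ≤ x := hx.1
      have hgπ : g x ≤ Real.pi := by
        rw [hgx]
        have : ε * x ≤ ε * T := by nlinarith [hx.2.le]
        linarith
      have hgpos : 0 < g x := by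
        rw [hgx]; nlinarith
      rw [hDdef]
      rw [Finset.sup'_lt_iff]
      rintro p hp
      rw [Finset.mem_filter] at hp
      have hpx : θ x p.1 - θ x p.2 = g x := hp.2
      have hd : HasDerivAt (fun s => θ s p.1 - θ s p.2)
          (((K / N) * ∑ j : Fin N, a x p.1 j * Real.sin (θ x j - θ x p.1)) -
           ((K / N) * ∑ j : Fin N, a x p.2 j * Real.sin (θ x j - θ x p.2))) x :=
        (hode x hx0 p.1).sub (hode x hx0 p.2)
      rw [hd.deriv]
      have hKN : (0:ℝ) ≤ K / N := by positivity
      have hub : ∀ k, θ x k ≤ θ x p.1 := by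
        intro k
        have h1 : θ x k - θ x p.2 ≤ g x :=
          Finset.le_sup' (fun p : Fin N × Fin N => θ x p.1 - θ x p.2) (Finset.mem_univ (k, p.2))
        linarith
      have hlb : ∀ k, θ x p.2 ≤ θ x k := by
        intro k
        have h1 : θ x p.1 - θ x k ≤ g x :=
          Finset.le_sup' (fun p : Fin N × Fin N => θ x p.1 - θ x p.2) (Finset.mem_univ (p.1, k))
        linarith
      have hS1 : (∑ j : Fin N, a x p.1 j * Real.sin (θ x j - θ x p.1)) ≤ 0 := by
        apply Finset.sum_nonpos
        intro j _
        have hj1 : θ x j - θ x p.1 ≤ 0 := by linarith [hub j]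
        have hj2 : -Real.pi ≤ θ x j - θ x p.1 := by
          have h1 : θ x p.1 - θ x j ≤ g x :=
            Finset.le_sup' (fun p : Fin N × Fin N => θ x p.1 - θ x p.2)
              (Finset.mem_univ (p.1, j))
          linarith
        have := Real.sin_nonpos_of_nonpos_of_neg_pi_le hj1 hj2
        exact mul_nonpos_of_nonneg_of_nonpos (ha x hx0 p.1 j) this
      have hS2 : 0 ≤ (∑ j : Fin N, a x p.2 j * Real.sin (θ x j - θ x p.2)) := by
        apply Finset.sum_nonneg
        intro j _
        have hj1 : 0 ≤ θ x j - θ x p.2 := by linarith [hlb j]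
        have hj2 : θ x j - θ x p.2 ≤ Real.pi := by
          have h1 : θ x j - θ x p.2 ≤ g x :=
            Finset.le_sup' (fun p : Fin N × Fin N => θ x p.1 - θ x p.2)
              (Finset.mem_univ (j, p.2))
          linarith
        exact mul_nonneg (ha x hx0 p.2 j) (Real.sin_nonneg_of_nonneg_of_le_pi hj1 hj2)
      have h1 : (K / N) * (∑ j : Fin N, a x p.1 j * Real.sin (θ x j - θ x p.1)) ≤ 0 :=
        mul_nonpos_of_nonneg_of_nonpos hKN hS1
      have h2 : 0 ≤ (K / N) * (∑ j : Fin N, a x p.2 j * Real.sin (θ x j - θ x p.2)) :=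
        mul_nonneg hKN hS2
      linarith
  have hgle : ∀ t : ℝ, 0 ≤ t → g t ≤ γ := by
    intro t ht
    rcases eq_or_lt_of_le ht with h | h
    · rw [← h]; exact hg0
    · apply le_of_forall_pos_le_add
      intro δ hδ
      set ε : ℝ := min (δ / t) ((Real.pi - γ) / t) with hε
      have hεpos : 0 < ε := by
        apply lt_min
        · positivity
        · have : 0 < Real.pi - γ := by linarith
          positivity
      have h1 : ε * t ≤ Real.pi - γ := by
        have h4 : ε ≤ (Real.pi - γ) / t := min_le_right _ _
        calc ε * t ≤ (Real.pi - γ) / t * t := mul_le_mul_of_nonneg_right h4 h.le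
        _ = Real.pi - γ := div_mul_cancel₀ _ (ne_of_gt h)
      have h2 : ε * t ≤ δ := by
        have h3 : ε ≤ δ / t := min_le_left _ _
        calc ε * t ≤ δ / t * t := mul_le_mul_of_nonneg_right h3 h.le
        _ = δ := div_mul_cancel₀ _ (ne_of_gt h)
      have := hfence t ht ε hεpos (by linarith)
      linarith
  have hcoh : ∀ s : ℝ, 0 ≤ s → ∀ i j : Fin N, |θ s i - θ s j| ≤ γ := by
    intro s hs i j
    rw [abs_sub_le_iff]
    constructor
    · exact le_trans (Finset.le_sup' (fun p : Fin N × Fin N => θ s p.1 - θ s p.2)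
        (Finset.mem_univ (i, j))) (hgle s hs)
    · exact le_trans (Finset.le_sup' (fun p : Fin N × Fin N => θ s p.1 - θ s p.2)
        (Finset.mem_univ (j, i))) (hgle s hs)
  -- mean conservation
  have hmean : ∀ t : ℝ, 0 ≤ t → (∑ i : Fin N, θ t i) = 0 := by
    intro t ht
    have hconst := constant_of_has_deriv_right_zero (f := fun s => ∑ i : Fin N, θ s i)
      (a := 0) (b := t) ?_ ?_ t (right_mem_Icc.2 ht)
    · exact hconst.trans hmean0
    · intro s hs
      have : HasDerivAt (fun u => ∑ i : Fin N, θ u i)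
          (∑ i : Fin N, (K / N) * ∑ j : Fin N, a s i j * Real.sin (θ s j - θ s i)) s :=
        HasDerivAt.fun_sum (fun i _ => hode s hs.1 i)
      exact this.continuousAt.continuousWithinAt
    · intro s hs
      have hds : HasDerivAt (fun u => ∑ i : Fin N, θ u i)
          (∑ i : Fin N, (K / N) * ∑ j : Fin N, a s i j * Real.sin (θ s j - θ s i)) s :=
        HasDerivAt.fun_sum (fun i _ => hode s hs.1 i)
      have hzero : (∑ i : Fin N, (K / N) * ∑ j : Fin N,
          a s i j * Real.sin (θ s j - θ s i)) = 0 := by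
        have hS : (∑ i : Fin N, ∑ j : Fin N, a s i j * Real.sin (θ s j - θ s i)) = 0 := by
          have hswap : (∑ i : Fin N, ∑ j : Fin N, a s i j * Real.sin (θ s j - θ s i))
              = ∑ i : Fin N, ∑ j : Fin N, -(a s i j * Real.sin (θ s j - θ s i)) := by
            rw [Finset.sum_comm]
            apply Finset.sum_congr rfl
            intro x _
            apply Finset.sum_congr rfl
            intro y _
            rw [hsym s hs.1 y x, show θ s x - θ s y = -(θ s y - θ s x) by ring,
              Real.sin_neg]
            ring
          have : (∑ i : Fin N, ∑ j : Fin N, a s i j * Real.sin (θ s j - θ s i))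
              = -(∑ i : Fin N, ∑ j : Fin N, a s i j * Real.sin (θ s j - θ s i)) := by
            conv_lhs => rw [hswap]
            simp
          linarith
        calc (∑ i : Fin N, (K / N) * ∑ j : Fin N, a s i j * Real.sin (θ s j - θ s i))
            = (K / N) * ∑ i : Fin N, ∑ j : Fin N, a s i j * Real.sin (θ s j - θ s i) := by
              rw [Finset.mul_sum]
        _ = 0 := by rw [hS]; ring
      rw [hzero] at hds
      exact hds.hasDerivWithinAt
  -- the energy and its derivative
  set V : ℝ → ℝ := fun s => ∑ i : Fin N, θ s i ^ 2 with hVdef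
  set Vd : ℝ → ℝ := fun s => ∑ i : Fin N,
      2 * θ s i * ((K / N) * ∑ j : Fin N, a s i j * Real.sin (θ s j - θ s i)) with hVddef
  have hVnn : ∀ s, 0 ≤ V s := fun s => Finset.sum_nonneg fun i _ => sq_nonneg _
  have hVderiv : ∀ s : ℝ, 0 ≤ s → HasDerivAt V (Vd s) s := by
    intro s hs
    have h1 : HasDerivAt (fun u => ∑ i : Fin N, θ u i ^ 2)
        (∑ i : Fin N, (2:ℕ) * θ s i ^ 1 *
          ((K / N) * ∑ j : Fin N, a s i j * Real.sin (θ s j - θ s i))) s :=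
      HasDerivAt.fun_sum (fun i _ => (hode s hs i).pow 2)
    convert h1 using 1
    rw [hVddef]
    apply Finset.sum_congr rfl
    intro i _
    simp [pow_one]
  have hVd_eq : ∀ s : ℝ, 0 ≤ s → Vd s =
      -((K / N) * ∑ i : Fin N, ∑ j : Fin N,
        a s i j * ((θ s i - θ s j) * Real.sin (θ s i - θ s j))) := by
    intro s hs
    set f : Fin N → Fin N → ℝ :=
      fun i j => a s i j * (θ s i * Real.sin (θ s j - θ s i)) with hfdef
    have h1 : Vd s = (K / N) * (2 * ∑ i : Fin N, ∑ j : Fin N, f i j) := by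
      rw [hVddef]
      simp only [hfdef, Finset.mul_sum]
      apply Finset.sum_congr rfl
      intro i _
      apply Finset.sum_congr rfl
      intro j _
      ring
    have h2 : (∑ i : Fin N, ∑ j : Fin N, f i j)
        = ∑ i : Fin N, ∑ j : Fin N, -(a s i j * (θ s j * Real.sin (θ s j - θ s i))) := by
      rw [Finset.sum_comm]
      apply Finset.sum_congr rfl
      intro x _
      apply Finset.sum_congr rfl
      intro y _
      rw [hfdef]
      simp only
      rw [hsym s hs y x, show θ s x - θ s y = -(θ s y - θ s x) by ring, Real.sin_neg]
      ring
    have h3 : 2 * (∑ i : Fin N, ∑ j : Fin N, f i j)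
        = -(∑ i : Fin N, ∑ j : Fin N,
            a s i j * ((θ s i - θ s j) * Real.sin (θ s i - θ s j))) := by
      have e1 : 2 * (∑ i : Fin N, ∑ j : Fin N, f i j)
          = (∑ i : Fin N, ∑ j : Fin N, f i j)
            + ∑ i : Fin N, ∑ j : Fin N, -(a s i j * (θ s j * Real.sin (θ s j - θ s i))) := by
        rw [← h2]; ring
      rw [e1, ← Finset.sum_add_distrib]
      rw [show -(∑ i : Fin N, ∑ j : Fin N,
            a s i j * ((θ s i - θ s j) * Real.sin (θ s i - θ s j)))
          = ∑ i : Fin N, ∑ j : Fin N,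
            -(a s i j * ((θ s i - θ s j) * Real.sin (θ s i - θ s j))) by simp]
      apply Finset.sum_congr rfl
      intro i _
      rw [← Finset.sum_add_distrib]
      apply Finset.sum_congr rfl
      intro j _
      rw [hfdef]
      simp only
      rw [show θ s j - θ s i = -(θ s i - θ s j) by ring, Real.sin_neg]
      ring
    rw [h1, h3]
    ring
  have hVd_le : ∀ s : ℝ, 0 ≤ s → Vd s ≤ -((K / N) * (2 / Real.pi)) * (c s * V s) := by
    intro s hs
    rw [hVd_eq s hs]
    have hA1 : ∀ i j : Fin N, 2 / Real.pi * (a s i j * (θ s i - θ s j) ^ 2)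
        ≤ a s i j * ((θ s i - θ s j) * Real.sin (θ s i - θ s j)) := by
      intro i j
      have habs : |θ s i - θ s j| ≤ Real.pi / 2 :=
        le_trans (hcoh s hs i j) (le_of_lt hγ)
      have h1 := xsin_bound' habs
      have h2 := mul_le_mul_of_nonneg_left h1 (ha s hs i j)
      nlinarith
    have hA2 : 2 / Real.pi * (∑ i : Fin N, ∑ j : Fin N, a s i j * (θ s i - θ s j) ^ 2)
        ≤ ∑ i : Fin N, ∑ j : Fin N,
          a s i j * ((θ s i - θ s j) * Real.sin (θ s i - θ s j)) := by
      rw [Finset.mul_sum]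
      apply Finset.sum_le_sum
      intro i _
      rw [Finset.mul_sum]
      exact Finset.sum_le_sum fun j _ => hA1 i j
    have hgap' := hgap s hs (θ s) (hmean s hs)
    have hpi2 : (0:ℝ) < 2 / Real.pi := by positivity
    have hchain : 2 / Real.pi * (c s * V s)
        ≤ ∑ i : Fin N, ∑ j : Fin N,
          a s i j * ((θ s i - θ s j) * Real.sin (θ s i - θ s j)) := by
      refine le_trans ?_ hA2
      apply mul_le_mul_of_nonneg_left _ hpi2.le
      exact hgap'
    have hKN : (0:ℝ) ≤ K / N := by positivity
    nlinarith [mul_le_mul_of_nonneg_left hchain hKN]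
  -- V is antitone on [0, ∞)
  have hVanti : AntitoneOn V (Ici (0:ℝ)) := by
    apply antitoneOn_of_deriv_nonpos (convex_Ici 0)
    · intro s hs
      exact ((hVderiv s hs).continuousAt).continuousWithinAt
    · intro s hs
      rw [interior_Ici] at hs
      exact ((hVderiv s hs.le).differentiableAt).differentiableWithinAt
    · intro s hs
      rw [interior_Ici] at hs
      rw [(hVderiv s hs.le).deriv]
      have h1 := hVd_le s hs.le
      have h2 : (0:ℝ) ≤ (K / N) * (2 / Real.pi) := by positivity
      have h3 := hc0 s hs.le
      have h4 := hVnn s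
      nlinarith [mul_nonneg h2 (mul_nonneg h3 h4)]
  -- if V stays above L > 0, the cumulative gap is bounded: contradiction
  have hno : ∀ L : ℝ, 0 < L → ¬ (∀ s : ℝ, 0 ≤ s → L ≤ V s) := by
    intro L hL hLV
    set κ : ℝ := (K / N) * (2 / Real.pi) with hκ
    have hκpos : 0 < κ := by rw [hκ]; positivity
    set W : ℝ → ℝ := fun s => V (max s 0) with hW
    have hWcont : Continuous W := by
      rw [continuous_iff_continuousAt]
      intro s
      have hmx : Continuous fun u : ℝ => max u 0 := continuous_id.max continuous_const
      have h2 : Tendsto (fun u : ℝ => max u 0) (𝓝 s) (𝓝 (max s 0)) := hmx.continuousAt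
      have h3 : Tendsto V (𝓝 (max s 0)) (𝓝 (V (max s 0))) :=
        (hVderiv _ (le_max_right s 0)).continuousAt
      have h4 := h3.comp h2
      simp only [hW]
      exact h4
    have hWanti : Antitone W := by
      intro s u hsu
      simp only [hW]
      exact hVanti (le_max_right s 0) (le_max_right u 0) (max_le_max hsu le_rfl)
    have hWnn : ∀ s, 0 ≤ W s := fun s => hVnn _
    have hWle : ∀ s, W s ≤ V 0 := by
      intro s
      have := hVanti (le_refl (0:ℝ) : (0:ℝ) ∈ Ici (0:ℝ)) (le_max_right s 0) (le_max_right s 0)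
      simpa [hW] using this
    have hWeq : ∀ s : ℝ, 0 ≤ s → W s = V s := by
      intro s hs; rw [hW]; simp [max_eq_left hs]
    have hclaim : ∀ t : ℝ, 1 ≤ t → κ * L * ∫ s in (0:ℝ)..t, c s ≤ V 0 := by
      intro t ht1
      have ht0 : (0:ℝ) ≤ t := by linarith
      set G : ℕ → ℝ → ℝ :=
        fun n s => ((n:ℝ) + 1) * (W s - W (s + 1 / ((n:ℝ) + 1))) with hGdef
      have hGcont : ∀ n, Continuous (G n) := by
        intro n
        exact continuous_const.mul (hWcont.sub (hWcont.comp (continuous_id.add continuous_const)))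
      have hGnn : ∀ n s, 0 ≤ G n s := by
        intro n s
        have h1 : W (s + 1 / ((n:ℝ) + 1)) ≤ W s := by
          apply hWanti
          have : (0:ℝ) < 1 / ((n:ℝ)+1) := by positivity
          linarith
        have h2 : (0:ℝ) ≤ (n:ℝ) + 1 := by positivity
        rw [hGdef]
        exact mul_nonneg h2 (by linarith)
      have hGint : ∀ n : ℕ, ∫ s in (0:ℝ)..t, G n s ≤ V 0 := by
        intro n
        set h : ℝ := 1 / ((n:ℝ) + 1) with hh
        have hhpos : 0 < h := by rw [hh]; positivity
        have hh1 : h ≤ 1 := by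
          rw [hh]
          rw [div_le_one (by positivity : (0:ℝ) < (n:ℝ) + 1)]
          linarith [(Nat.cast_nonneg n : (0:ℝ) ≤ (n:ℝ))]
        have hWint : ∀ u v : ℝ, IntervalIntegrable W volume u v :=
          fun u v => hWcont.intervalIntegrable u v
        have hWhint : ∀ u v : ℝ, IntervalIntegrable (fun s => W (s + h)) volume u v :=
          fun u v => (hWcont.comp (continuous_id.add continuous_const)).intervalIntegrable u v
        have e1 : ∫ s in (0:ℝ)..t, G n s
            = ((n:ℝ) + 1) * ((∫ s in (0:ℝ)..t, W s) - ∫ s in (0:ℝ)..t, W (s + h)) := by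
          rw [hGdef]
          rw [intervalIntegral.integral_const_mul]
          rw [intervalIntegral.integral_sub (hWint 0 t) (hWhint 0 t)]
        have e2 : (∫ s in (0:ℝ)..t, W (s + h)) = ∫ s in h..(t + h), W s := by
          have := intervalIntegral.integral_comp_add_right (a := (0:ℝ)) (b := t) W h
          simpa using this
        have a1 : (∫ s in (0:ℝ)..h, W s) + (∫ s in h..t, W s) = ∫ s in (0:ℝ)..t, W s :=
          integral_add_adjacent_intervals (hWint 0 h) (hWint h t)
        have a2 : (∫ s in h..t, W s) + (∫ s in t..(t + h), W s) = ∫ s in h..(t + h), W s :=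
          integral_add_adjacent_intervals (hWint h t) (hWint t (t + h))
        have b1 : (∫ s in (0:ℝ)..h, W s) ≤ h * V 0 := by
          have hmono : (∫ s in (0:ℝ)..h, W s) ≤ ∫ s in (0:ℝ)..h, V 0 :=
            intervalIntegral.integral_mono_on hhpos.le (hWint 0 h)
              (intervalIntegrable_const) (fun s _ => hWle s)
          have : (∫ s in (0:ℝ)..h, (V 0 : ℝ)) = h * V 0 := by
            simp [mul_comm]
          linarith
        have b2 : 0 ≤ ∫ s in t..(t + h), W s :=
          intervalIntegral.integral_nonneg (by linarith) (fun s _ => hWnn s)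
        have hnh : ((n:ℝ) + 1) * h = 1 := by
          rw [hh]; field_simp
        rw [e1, e2]
        calc ((n:ℝ) + 1) * ((∫ s in (0:ℝ)..t, W s) - ∫ s in h..(t + h), W s)
            = ((n:ℝ) + 1) * ((∫ s in (0:ℝ)..h, W s) - ∫ s in t..(t + h), W s) := by
              have : (∫ s in (0:ℝ)..t, W s) - (∫ s in h..(t+h), W s)
                  = (∫ s in (0:ℝ)..h, W s) - ∫ s in t..(t + h), W s := by linarith
              rw [this]
          _ ≤ ((n:ℝ) + 1) * (h * V 0) := by
              apply mul_le_mul_of_nonneg_left (by linarith) (by positivity)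
          _ = V 0 := by rw [← mul_assoc, hnh, one_mul]
      have hGlim : ∀ s : ℝ, 0 ≤ s → Tendsto (fun n => G n s) atTop (𝓝 (-Vd s)) := by
        intro s hs
        have hd := hVderiv s hs
        have hslope := hasDerivAt_iff_tendsto_slope.1 hd
        have hzt : Tendsto (fun n : ℕ => s + 1 / ((n:ℝ) + 1)) atTop (𝓝[≠] s) := by
          apply tendsto_nhdsWithin_of_tendsto_nhds_of_eventually_within
          · have h1 := tendsto_one_div_add_atTop_nhds_zero_nat (𝕜 := ℝ)
            have h2 : Tendsto (fun _ : ℕ => s) atTop (𝓝 s) := tendsto_const_nhds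
            simpa using h2.add h1
          · apply Eventually.of_forall
            intro n
            have h1 : (0:ℝ) < 1 / ((n:ℝ)+1) := by positivity
            simp only [Set.mem_compl_iff, Set.mem_singleton_iff]
            intro hcontra
            nlinarith [hcontra]
        have hcomp := (hslope.comp hzt).neg
        apply hcomp.congr
        intro n
        have h1 : (0:ℝ) < 1 / ((n:ℝ)+1) := by positivity
        have hs1 : (0:ℝ) ≤ s + 1 / ((n:ℝ)+1) := by linarith
        simp only [Function.comp]
        rw [slope_def_field, hGdef]
        simp only
        rw [hWeq s hs, hWeq _ hs1]
        have hne : s + 1 / ((n:ℝ)+1) - s ≠ 0 := by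
          intro hcontra; nlinarith
        field_simp
        ring
      -- Fatou
      have hmeas : ∀ n, Measurable fun s => ENNReal.ofReal (G n s) :=
        fun n => (hGcont n).measurable.ennreal_ofReal
      have step1 : ∫⁻ s in Set.Ioc (0:ℝ) t, ENNReal.ofReal (κ * L * c s)
          ≤ ∫⁻ s in Set.Ioc (0:ℝ) t,
              Filter.liminf (fun n => ENNReal.ofReal (G n s)) atTop := by
        apply lintegral_mono_ae
        rw [ae_restrict_iff' measurableSet_Ioc]
        apply Eventually.of_forall
        intro s hs
        have hs0 : (0:ℝ) ≤ s := hs.1.le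
        have hlim : Filter.liminf (fun n => ENNReal.ofReal (G n s)) atTop
            = ENNReal.ofReal (-Vd s) :=
          ((ENNReal.continuous_ofReal.tendsto _).comp (hGlim s hs0)).liminf_eq
        rw [hlim]
        apply ENNReal.ofReal_le_ofReal
        have h1 := hVd_le s hs0
        have h2 : κ * L * c s ≤ κ * (c s * V s) := by
          have h3 := hLV s hs0
          have h4 := hc0 s hs0
          nlinarith [mul_nonneg (mul_nonneg hκpos.le h4) (sub_nonneg.2 h3)]
        linarith
      have step2 : ∫⁻ s in Set.Ioc (0:ℝ) t,
            Filter.liminf (fun n => ENNReal.ofReal (G n s)) atTop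
          ≤ Filter.liminf (fun n => ∫⁻ s in Set.Ioc (0:ℝ) t,
              ENNReal.ofReal (G n s)) atTop :=
        lintegral_liminf_le hmeas
      have step3 : ∀ n, (∫⁻ s in Set.Ioc (0:ℝ) t, ENNReal.ofReal (G n s))
          ≤ ENNReal.ofReal (V 0) := by
        intro n
        have hint : IntegrableOn (G n) (Set.Ioc 0 t) := (hGcont n).integrableOn_Ioc
        rw [← ofReal_integral_eq_lintegral_ofReal hint
          (Eventually.of_forall fun s => hGnn n s)]
        apply ENNReal.ofReal_le_ofReal
        have heq : ∫ s in Set.Ioc (0:ℝ) t, G n s = ∫ s in (0:ℝ)..t, G n s :=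
          (intervalIntegral.integral_of_le ht0).symm
        rw [heq]
        exact hGint n
      have step4 : Filter.liminf (fun n => ∫⁻ s in Set.Ioc (0:ℝ) t,
            ENNReal.ofReal (G n s)) atTop ≤ ENNReal.ofReal (V 0) := by
        have h1 : Filter.liminf (fun n => ∫⁻ s in Set.Ioc (0:ℝ) t,
              ENNReal.ofReal (G n s)) atTop
            ≤ Filter.liminf (fun _ : ℕ => ENNReal.ofReal (V 0)) atTop :=
          liminf_le_liminf (Eventually.of_forall step3)
        rwa [liminf_const] at h1
      have hfatou : ∫⁻ s in Set.Ioc (0:ℝ) t, ENNReal.ofReal (κ * L * c s)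
          ≤ ENNReal.ofReal (V 0) :=
        le_trans step1 (le_trans step2 step4)
      have hcIoc : IntegrableOn c (Set.Ioc 0 t) := by
        have := hcInt t ht0
        rwa [intervalIntegrable_iff_integrableOn_Ioc_of_le ht0] at this
      have hcint : IntegrableOn (fun s => κ * L * c s) (Set.Ioc 0 t) :=
        hcIoc.const_mul (κ * L)
      have hLHS : ENNReal.ofReal (κ * L * ∫ s in (0:ℝ)..t, c s)
          = ∫⁻ s in Set.Ioc (0:ℝ) t, ENNReal.ofReal (κ * L * c s) := by
        rw [← ofReal_integral_eq_lintegral_ofReal hcint ?_]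
        · congr 1
          rw [intervalIntegral.integral_of_le ht0]
          rw [MeasureTheory.integral_const_mul]
        · have hae : ∀ᵐ s ∂(volume.restrict (Set.Ioc (0:ℝ) t)), 0 ≤ κ * L * c s := by
            rw [ae_restrict_iff' measurableSet_Ioc]
            apply Eventually.of_forall
            intro s hs
            have := hc0 s hs.1.le
            positivity
          exact hae
      rw [← hLHS] at hfatou
      exact (ENNReal.ofReal_le_ofReal_iff (hVnn 0)).1 hfatou
    have hκL : 0 < κ * L := mul_pos hκpos hL
    obtain ⟨t, ht⟩ := ((hdiv.eventually_ge_atTop (V 0 / (κ * L) + 1)).and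
      (eventually_ge_atTop (1:ℝ))).exists
    have h1 := hclaim t ht.2
    have h2 : V 0 / (κ * L) + 1 ≤ ∫ s in (0:ℝ)..t, c s := ht.1
    have h3 : κ * L * (V 0 / (κ * L) + 1) ≤ κ * L * ∫ s in (0:ℝ)..t, c s :=
      mul_le_mul_of_nonneg_left h2 hκL.le
    have h4 : κ * L * (V 0 / (κ * L) + 1) = V 0 + κ * L := by
      field_simp
    nlinarith
  -- conclude V → 0
  have hVtend : Tendsto V atTop (𝓝 0) := by
    rw [Metric.tendsto_atTop]
    intro ε hε
    have hex : ∃ t₀ : ℝ, 0 ≤ t₀ ∧ V t₀ < ε := by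
      by_contra hcon
      push_neg at hcon
      exact hno ε hε (fun s hs => hcon s hs)
    obtain ⟨t₀, ht₀, hVt₀⟩ := hex
    refine ⟨t₀, fun t ht => ?_⟩
    have h1 : V t ≤ V t₀ := hVanti (mem_Ici.2 ht₀) (mem_Ici.2 (ht₀.trans ht)) ht
    have h2 := hVnn t
    rw [Real.dist_eq, sub_zero, abs_of_nonneg h2]
    linarith
  -- conclude θ → 0
  have hcoord : ∀ i : Fin N, Tendsto (fun t => θ t i) atTop (𝓝 0) := by
    intro i
    rw [tendsto_zero_iff_abs_tendsto_zero]
    have h1 : Tendsto (fun t => Real.sqrt (V t)) atTop (𝓝 0) := by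
      have := hVtend.sqrt
      simpa using this
    apply squeeze_zero' (Eventually.of_forall fun t => abs_nonneg _) _ h1
    filter_upwards [eventually_ge_atTop (0:ℝ)] with t ht
    have h2 : (θ t i) ^ 2 ≤ V t :=
      Finset.single_le_sum (f := fun j => θ t j ^ 2) (fun j _ => sq_nonneg _)
        (Finset.mem_univ i)
    calc |θ t i| = Real.sqrt ((θ t i) ^ 2) := (Real.sqrt_sq_eq_abs _).symm
    _ ≤ Real.sqrt (V t) := Real.sqrt_le_sqrt h2
  rw [tendsto_pi_nhds]
  intro i
  simpa using hcoord i
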